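/- For every A ∈ ℝ, the Bowen–York field S^A(x)_{ab} = (A/‖x‖³)·(3xₐx_b/‖x‖² − δ_{ab}) on ℝ³∖{0} is a smooth solution of the Euclidean momentum constraint: for every x ≠ 0 the matrix S^A(x) is symmetric, has vanishing trace Σₐ S^A(x)_{aa} = 0, and is divergence-free, i.e. Σₐ ∂ₐ S^A(x)_{ab} = 0 for each b ∈ {1,2,3}. -/

import Mathlib

/-- The Bowen–York tensor `S^A(x)_{ab} = (A/‖x‖³)(3 xₐ x_b/‖x‖² − δ_{ab})`. -/
noncomputable def bowenYorkA (A : ℝ) (x : EuclideanSpace ℝ (Fin 3)) (a b : Fin 3) : ℝ :=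
  (A / ‖x‖ ^ 3) * (3 * x a * x b / ‖x‖ ^ 2 - if a = b then 1 else 0)

local notation "E3" => EuclideanSpace ℝ (Fin 3)

private lemma normsq_eq (y : E3) : ‖y‖ ^ 2 = ∑ i, y i * y i := by
  rw [EuclideanSpace.norm_eq, Real.sq_sqrt (by positivity)]
  simp [sq]

private lemma rpow_norm (y : E3) (c : ℕ) :
    ((∑ i, y i * y i) ^ (-(c : ℝ) / 2)) = (‖y‖ ^ c)⁻¹ := by
  rw [← normsq_eq, ← Real.rpow_natCast ‖y‖ 2, ← Real.rpow_mul (norm_nonneg y),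
    show ((2 : ℕ) : ℝ) * (-(c : ℝ) / 2) = -(c : ℝ) by push_cast; ring,
    Real.rpow_neg (norm_nonneg y), Real.rpow_natCast]

private lemma by_eq (A : ℝ) (a b : Fin 3) :
    (fun y : E3 => bowenYorkA A y a b) =
      fun y : E3 => A * (3 * y a * y b * (∑ i, y i * y i) ^ (-(5 : ℝ) / 2) -
        (if a = b then 1 else 0) * (∑ i, y i * y i) ^ (-(3 : ℝ) / 2)) := by
  funext y
  by_cases hy : y = 0
  · subst hy
    simp [bowenYorkA, Real.zero_rpow, show (-(5:ℝ)/2) ≠ 0 by norm_num,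
      show (-(3:ℝ)/2) ≠ 0 by norm_num]
  · have h5 := rpow_norm y 5
    have h3 := rpow_norm y 3
    push_cast at h5 h3
    rw [h5, h3]
    have hn : ‖y‖ ≠ 0 := by simpa using hy
    have alg : ∀ d u v : ℝ, A / ‖y‖ ^ 3 * (3 * u * v / ‖y‖ ^ 2 - d)
        = A * (3 * u * v * (‖y‖ ^ 5)⁻¹ - d * (‖y‖ ^ 3)⁻¹) := by
      intro d u v; field_simp
    exact alg _ _ _


/-- For every `A ∈ ℝ`, the Bowen–York field `S^A` on `ℝ³∖{0}` is a solution of the Euclidean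
momentum constraint: for every `x ≠ 0` the matrix `S^A(x)` is symmetric, trace-free and
divergence-free. -/
theorem stmt_11 (A : ℝ) :
    ∀ x : EuclideanSpace ℝ (Fin 3), x ≠ 0 →
      (∀ a b : Fin 3, bowenYorkA A x a b = bowenYorkA A x b a) ∧
      (∑ a : Fin 3, bowenYorkA A x a a) = 0 ∧
      (∀ b : Fin 3,
        ∑ a : Fin 3,
          fderiv ℝ (fun y : EuclideanSpace ℝ (Fin 3) => bowenYorkA A y a b) x
            (EuclideanSpace.single a 1) = 0) := by
  intro x hx
  have hn : ‖x‖ ≠ 0 := by simpa using hx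
  have h2 : ‖x‖ ^ 2 = ∑ i, x i * x i := normsq_eq x
  refine ⟨?_, ?_, ?_⟩
  · intro a b
    unfold bowenYorkA
    have : (if a = b then (1:ℝ) else 0) = if b = a then 1 else 0 := by simp [eq_comm]
    rw [this]
    ring
  · simp only [bowenYorkA, Fin.sum_univ_three]
    norm_num
    rw [Fin.sum_univ_three] at h2
    have hsum : 3 * x 0 * x 0 / ‖x‖ ^ 2 + 3 * x 1 * x 1 / ‖x‖ ^ 2 + 3 * x 2 * x 2 / ‖x‖ ^ 2
        = 3 := by
      rw [← add_div, ← add_div,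
        show 3 * x 0 * x 0 + 3 * x 1 * x 1 + 3 * x 2 * x 2 = 3 * ‖x‖ ^ 2 by
          rw [h2]; ring,
        mul_div_assoc, div_self (pow_ne_zero _ hn), mul_one]
    linear_combination (A / ‖x‖ ^ 3) * hsum
  · intro b
    set r : ℝ := ∑ i, x i * x i with hr_def
    have hrpos : 0 < r := by rw [← h2]; positivity
    have hcoord : ∀ i : Fin 3, HasFDerivAt (fun y : E3 => y i)
        (EuclideanSpace.proj i : E3 →L[ℝ] ℝ) x :=
      fun i => (EuclideanSpace.proj (𝕜 := ℝ) i).hasFDerivAt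
    set P : Fin 3 → (E3 →L[ℝ] ℝ) := fun i => EuclideanSpace.proj i with hP
    set G : E3 →L[ℝ] ℝ := ∑ i, (x i • P i + x i • P i) with hG
    have hg : HasFDerivAt (fun y : E3 => ∑ i, y i * y i) G x :=
      HasFDerivAt.fun_sum (fun i _ => (hcoord i).mul (hcoord i))
    have hrpow : ∀ c : ℝ, HasFDerivAt (fun y : E3 => (∑ i, y i * y i) ^ c)
        ((c * r ^ (c - 1)) • G) x :=
      fun c => HasDerivAt.comp_hasFDerivAt (f := fun y : E3 => ∑ i, y i * y i) x
        (Real.hasDerivAt_rpow_const (x := r) (p := c) (Or.inl hrpos.ne')) hg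
    have hD : ∀ a : Fin 3, HasFDerivAt (fun y : E3 => bowenYorkA A y a b)
        (A • (((3 * x a * x b) • ((-(5:ℝ)/2 * r ^ (-(5:ℝ)/2 - 1)) • G) +
          ((r ^ (-(5:ℝ)/2)) • ((3 * x a) • P b + x b • ((3:ℝ) • P a)))) -
          (if a = b then (1:ℝ) else 0) • ((-(3:ℝ)/2 * r ^ (-(3:ℝ)/2 - 1)) • G))) x := by
      intro a
      rw [by_eq]
      exact ((((((hcoord a).const_mul 3).mul (hcoord b)).mul (hrpow (-(5:ℝ)/2))).sub
        (((hrpow (-(3:ℝ)/2)).const_mul _))).const_mul A)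
    have hfd : ∀ a : Fin 3, fderiv ℝ (fun y : E3 => bowenYorkA A y a b) x =
        (A • (((3 * x a * x b) • ((-(5:ℝ)/2 * r ^ (-(5:ℝ)/2 - 1)) • G) +
          ((r ^ (-(5:ℝ)/2)) • ((3 * x a) • P b + x b • ((3:ℝ) • P a)))) -
          (if a = b then (1:ℝ) else 0) • ((-(3:ℝ)/2 * r ^ (-(3:ℝ)/2 - 1)) • G))) :=
      fun a => (hD a).fderiv
    simp only [hfd]
    have hGapp : ∀ a : Fin 3, G (EuclideanSpace.single a 1) = 2 * x a := by
      intro a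
      simp only [hG, ContinuousLinearMap.sum_apply, ContinuousLinearMap.add_apply,
        ContinuousLinearMap.smul_apply, hP, PiLp.proj_apply,
        EuclideanSpace.single_apply, Fin.sum_univ_three, smul_eq_mul]
      fin_cases a <;> simp <;> ring
    have hPapp : ∀ i a : Fin 3, P i (EuclideanSpace.single a 1) = if i = a then 1 else 0 := by
      intro i a
      simp [hP, EuclideanSpace.single_apply]
    have hc35 : r ^ (-(3:ℝ)/2 - 1) = r ^ (-(5:ℝ)/2) := by norm_num
    rw [Fin.sum_univ_three] at hr_def
    have key : r ^ (-(5:ℝ)/2 - 1) * (x 0 * x 0 + x 1 * x 1 + x 2 * x 2) = r ^ (-(5:ℝ)/2) := by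
      rw [← hr_def, Real.rpow_sub_one hrpos.ne']
      field_simp
    simp only [ContinuousLinearMap.smul_apply, ContinuousLinearMap.sub_apply,
      ContinuousLinearMap.add_apply, hGapp, hPapp, hc35, smul_eq_mul, Fin.sum_univ_three]
    fin_cases b
    · simp only [Fin.zero_eta, Fin.mk_one, show (⟨2, by norm_num⟩ : Fin 3) = 2 from rfl,
        show ((0:Fin 3) = 1) = False from by decide, show ((1:Fin 3) = 0) = False from by decide,
        show ((0:Fin 3) = 2) = False from by decide, show ((2:Fin 3) = 0) = False from by decide,
        show ((1:Fin 3) = 2) = False from by decide, show ((2:Fin 3) = 1) = False from by decide,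
        reduceIte, if_false, Fin.reduceFinMk]
      linear_combination (-15 * A * x 0 : ℝ) * key
    · simp only [Fin.zero_eta, Fin.mk_one, show (⟨2, by norm_num⟩ : Fin 3) = 2 from rfl,
        show ((0:Fin 3) = 1) = False from by decide, show ((1:Fin 3) = 0) = False from by decide,
        show ((0:Fin 3) = 2) = False from by decide, show ((2:Fin 3) = 0) = False from by decide,
        show ((1:Fin 3) = 2) = False from by decide, show ((2:Fin 3) = 1) = False from by decide,
        reduceIte, if_false, Fin.reduceFinMk]
      linear_combination (-15 * A * x 1 : ℝ) * key
    · simp only [Fin.zero_eta, Fin.mk_one, show (⟨2, by norm_num⟩ : Fin 3) = 2 from rfl,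
        show ((0:Fin 3) = 1) = False from by decide, show ((1:Fin 3) = 0) = False from by decide,
        show ((0:Fin 3) = 2) = False from by decide, show ((2:Fin 3) = 0) = False from by decide,
        show ((1:Fin 3) = 2) = False from by decide, show ((2:Fin 3) = 1) = False from by decide,
        reduceIte, if_false, Fin.reduceFinMk]
      linear_combination (-15 * A * x 2 : ℝ) * key
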